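/- Let α ∈ [0,n) and 1 ≤ q < ∞ with αq < n. Define the fractional maximal operator M_α f(z) = sup_{ρ>0} ρ^α·(1/|B(z,ρ)|)∫_{B(z,ρ)} |f(ζ)| dζ. Then there exists C(α,q,n) > 0 such that for every f ∈ L^q(ℝⁿ) and every λ > 0, λ^q·|{z ∈ ℝⁿ : M_α f(z) > λ}|^(1 - αq/n) ≤ C(α,q,n)·∫_{ℝⁿ} |f|^q dζ. -/

import Mathlib

open MeasureTheory Metric

open scoped ENNReal

noncomputable def fracMaximal (n : ℕ) (α : ℝ) (f : EuclideanSpace ℝ (Fin n) → ℝ)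
    (z : EuclideanSpace ℝ (Fin n)) : ℝ :=
  ⨆ r : {r : ℝ // 0 < r},
    r.1 ^ α * ((volume (ball z r.1)).toReal⁻¹ * ∫ ζ in ball z r.1, |f ζ|)

-- tsum rpow subadditivity
theorem my_tsum_rpow {ι : Type*} (f : ι → ℝ≥0∞) {p : ℝ} (hp : 0 < p) (hp1 : p ≤ 1) :
    (∑' i, f i) ^ p ≤ ∑' i, f i ^ p := by
  have finsum : ∀ s : Finset ι, (∑ i ∈ s, f i) ^ p ≤ ∑ i ∈ s, f i ^ p := by
    intro s
    induction s using Finset.cons_induction with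
    | empty => simp [ENNReal.zero_rpow_of_pos hp]
    | cons a s ha ih =>
        rw [Finset.sum_cons, Finset.sum_cons]
        exact (ENNReal.rpow_add_le_add_rpow _ _ hp.le hp1).trans (by gcongr)
  have h1 : ∑' i, f i ≤ (∑' i, f i ^ p) ^ (1 / p) := by
    rw [ENNReal.tsum_eq_iSup_sum]
    apply iSup_le
    intro s
    calc ∑ i ∈ s, f i = ((∑ i ∈ s, f i) ^ p) ^ (1 / p) := by
          rw [← ENNReal.rpow_mul, mul_one_div_cancel hp.ne', ENNReal.rpow_one]
      _ ≤ (∑ i ∈ s, f i ^ p) ^ (1 / p) :=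
          ENNReal.rpow_le_rpow (finsum s) (by positivity)
      _ ≤ (∑' i, f i ^ p) ^ (1 / p) :=
          ENNReal.rpow_le_rpow (ENNReal.sum_le_tsum s) (by positivity)
  calc (∑' i, f i) ^ p ≤ ((∑' i, f i ^ p) ^ (1 / p)) ^ p := ENNReal.rpow_le_rpow h1 hp.le
    _ = ∑' i, f i ^ p := by
        rw [← ENNReal.rpow_mul, one_div_mul_cancel hp.ne', ENNReal.rpow_one]

theorem my_key_ball (n : ℕ) (hn : 1 ≤ n) (α q : ℝ) (hα : 0 ≤ α) (hq : 1 ≤ q)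
    (hαq : α * q < n)
    (f : EuclideanSpace ℝ (Fin n) → ℝ) (hf : Measurable f)
    (hint : Integrable (fun ζ => |f ζ| ^ q) volume)
    (lam : ℝ) (hlam : 0 < lam) (z : EuclideanSpace ℝ (Fin n)) (r : ℝ) (hr : 0 < r)
    (h : lam < r ^ α * ((volume (ball z r)).toReal⁻¹ * ∫ ζ in ball z r, |f ζ|)) :
    ENNReal.ofReal lam ^ q * (volume (ball z r)) ^ (1 - α * q / n) ≤
      (volume (ball (0 : EuclideanSpace ℝ (Fin n)) 1))⁻¹ ^ (α * q / n) *
        ∫⁻ ζ in ball z r, (‖f ζ‖₊ : ℝ≥0∞) ^ q := by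
  haveI : Nonempty (Fin n) := ⟨⟨0, hn⟩⟩
  haveI : Nontrivial (EuclideanSpace ℝ (Fin n)) := by
    unfold EuclideanSpace; infer_instance
  have hq0 : (0 : ℝ) < q := lt_of_lt_of_le one_pos hq
  have hn0 : (0 : ℝ) < n := by exact_mod_cast hn
  set θ : ℝ := α * q / n with hθdef
  have hθ0 : 0 ≤ θ := by positivity
  set V : ℝ≥0∞ := volume (ball (0 : EuclideanSpace ℝ (Fin n)) 1) with hVdef
  have hV0 : V ≠ 0 := (measure_ball_pos _ _ one_pos).ne'
  have hVt : V ≠ ∞ := measure_ball_lt_top.ne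
  set B : Set (EuclideanSpace ℝ (Fin n)) := ball z r with hBdef
  set μB : ℝ≥0∞ := volume B with hμBdef
  have hμB0 : μB ≠ 0 := (measure_ball_pos _ _ hr).ne'
  have hμBt : μB ≠ ∞ := measure_ball_lt_top.ne
  set g : EuclideanSpace ℝ (Fin n) → ℝ≥0∞ := fun ζ => (‖f ζ‖₊ : ℝ≥0∞) with hgdef
  set L : ℝ≥0∞ := ∫⁻ ζ in B, g ζ with hLdef
  set Lq : ℝ≥0∞ := ∫⁻ ζ in B, g ζ ^ q with hLqdef
  -- integrability of |f| on B
  have hint1 : IntegrableOn (fun ζ => |f ζ|) B volume := by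
    have hbig : IntegrableOn (fun ζ => 1 + |f ζ| ^ q) B volume :=
      (integrableOn_const measure_ball_lt_top.ne).add hint.integrableOn
    refine Integrable.mono' hbig (hf.abs.aestronglyMeasurable.restrict) ?_
    filter_upwards with ζ
    rw [Real.norm_eq_abs, abs_abs]
    rcases le_or_gt (|f ζ|) 1 with h1 | h1
    · have : (0:ℝ) ≤ |f ζ| ^ q := by positivity
      linarith
    · have h2 : |f ζ| ≤ |f ζ| ^ q := by
        nth_rewrite 1 [← Real.rpow_one (|f ζ|)]
        exact Real.rpow_le_rpow_of_exponent_le h1.le hq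
      linarith
  have hLeq : ENNReal.ofReal (∫ ζ in B, |f ζ|) = L := by
    rw [ofReal_integral_eq_lintegral_ofReal hint1
      (Filter.Eventually.of_forall fun ζ => abs_nonneg _)]
    refine lintegral_congr fun ζ => ?_
    simp only [hgdef]
    rw [← enorm_eq_nnnorm, Real.enorm_eq_ofReal_abs]
  -- step 1 : real inequality to ENNReal
  have hc : (0:ℝ) < μB.toReal := ENNReal.toReal_pos hμB0 hμBt
  have hreal : lam * μB.toReal ≤ r ^ α * ∫ ζ in B, |f ζ| := by
    have := mul_lt_mul_of_pos_right h hc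
    calc lam * μB.toReal ≤ r ^ α * ((μB.toReal)⁻¹ * ∫ ζ in B, |f ζ|) * μB.toReal := this.le
      _ = r ^ α * ∫ ζ in B, |f ζ| := by field_simp
  have h2 : ENNReal.ofReal lam * μB ≤ ENNReal.ofReal (r ^ α) * L := by
    calc ENNReal.ofReal lam * μB = ENNReal.ofReal (lam * μB.toReal) := by
          rw [ENNReal.ofReal_mul hlam.le, ENNReal.ofReal_toReal hμBt]
      _ ≤ ENNReal.ofReal (r ^ α * ∫ ζ in B, |f ζ|) := ENNReal.ofReal_le_ofReal hreal
      _ = ENNReal.ofReal (r ^ α) * L := by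
          rw [ENNReal.ofReal_mul (by positivity), hLeq]
  -- Hölder
  have h3 : L ≤ Lq ^ (1 / q) * μB ^ (1 - 1 / q) := by
    have := eLpNorm'_le_eLpNorm'_mul_rpow_measure_univ (p := 1) (q := q)
      one_pos hq (f := f) (μ := volume.restrict B) hf.aestronglyMeasurable.restrict
    simp only [eLpNorm', ENNReal.rpow_one, one_div_one, Measure.restrict_apply_univ] at this
    calc L = (∫⁻ a, (‖f a‖₊ : ℝ≥0∞) ^ (1:ℝ) ∂(volume.restrict B)) ^ (1:ℝ) := by
          simp [hLdef, hgdef]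
      _ ≤ (∫⁻ a, (‖f a‖₊ : ℝ≥0∞) ^ q ∂(volume.restrict B)) ^ (1/q) * μB ^ (1 - 1/q) := by
          convert this using 3 <;> norm_num <;> rfl
      _ = Lq ^ (1 / q) * μB ^ (1 - 1 / q) := rfl
  -- raise to power q
  have h4 : ENNReal.ofReal lam ^ q * μB ≤ ENNReal.ofReal (r ^ α) ^ q * Lq := by
    have hμBq1 : μB ^ (q - 1) ≠ 0 := by
      simp [ENNReal.rpow_eq_zero_iff, hμB0, hμBt]
    have hμBq1t : μB ^ (q - 1) ≠ ∞ := by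
      simp [ENNReal.rpow_eq_top_iff, hμB0, hμBt]
    rw [← ENNReal.mul_le_mul_iff_left hμBq1 hμBq1t]
    have hstep : (ENNReal.ofReal lam * μB) ^ q ≤
        (ENNReal.ofReal (r ^ α) * (Lq ^ (1 / q) * μB ^ (1 - 1 / q))) ^ q :=
      ENNReal.rpow_le_rpow (h2.trans (mul_le_mul_right h3 _)) hq0.le
    have eL : (ENNReal.ofReal lam * μB) ^ q = ENNReal.ofReal lam ^ q * μB * μB ^ (q - 1) := by
      rw [ENNReal.mul_rpow_of_nonneg _ _ hq0.le, mul_assoc]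
      congr 1
      nth_rewrite 1 [show q = 1 + (q - 1) by ring]
      rw [ENNReal.rpow_add _ _ hμB0 hμBt, ENNReal.rpow_one]
    have eR : (ENNReal.ofReal (r ^ α) * (Lq ^ (1 / q) * μB ^ (1 - 1 / q))) ^ q =
        ENNReal.ofReal (r ^ α) ^ q * Lq * μB ^ (q - 1) := by
      rw [ENNReal.mul_rpow_of_nonneg _ _ hq0.le, ENNReal.mul_rpow_of_nonneg _ _ hq0.le]
      rw [← ENNReal.rpow_mul, ← ENNReal.rpow_mul]
      rw [one_div_mul_cancel hq0.ne', ENNReal.rpow_one]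
      have : (1 - 1 / q) * q = q - 1 := by field_simp
      rw [this, mul_assoc]
    rw [← eL, ← eR]
    exact hstep
  -- rewrite radius powers
  have hμBeq : μB = ENNReal.ofReal r ^ (n : ℝ) * V := by
    rw [hμBdef, hBdef, Measure.addHaar_ball _ _ hr.le, finrank_euclideanSpace_fin,
      ENNReal.ofReal_pow hr.le, ← ENNReal.rpow_natCast]
  have hrα : ENNReal.ofReal (r ^ α) ^ q = ENNReal.ofReal r ^ (α * q) := by
    rw [← ENNReal.ofReal_rpow_of_nonneg hr.le hα, ← ENNReal.rpow_mul]
  have hr0 : ENNReal.ofReal r ≠ 0 := by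
    simp [ENNReal.ofReal_eq_zero, not_le, hr]
  have hrt : ENNReal.ofReal r ≠ ∞ := ENNReal.ofReal_ne_top
  have hμBθ : μB ^ θ = ENNReal.ofReal r ^ (α * q) * V ^ θ := by
    rw [hμBeq, ENNReal.mul_rpow_of_nonneg _ _ hθ0, ← ENNReal.rpow_mul]
    congr 2
    rw [hθdef]
    field_simp
  have hμBsplit : μB = μB ^ (1 - θ) * μB ^ θ := by
    rw [← ENNReal.rpow_add _ _ hμB0 hμBt]
    norm_num
  have hrαq0 : ENNReal.ofReal r ^ (α * q) ≠ 0 := by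
    simp [ENNReal.rpow_eq_zero_iff, hr0, hrt]
  have hrαqt : ENNReal.ofReal r ^ (α * q) ≠ ∞ := by
    simp [ENNReal.rpow_eq_top_iff, hr0, hrt]
  have h6 : ENNReal.ofReal lam ^ q * μB ^ (1 - θ) * V ^ θ ≤ Lq := by
    rw [← ENNReal.mul_le_mul_iff_left hrαq0 hrαqt]
    calc ENNReal.ofReal lam ^ q * μB ^ (1 - θ) * V ^ θ * ENNReal.ofReal r ^ (α * q)
        = ENNReal.ofReal lam ^ q * (μB ^ (1 - θ) * μB ^ θ) := by
          rw [hμBθ]; ring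
      _ = ENNReal.ofReal lam ^ q * μB := by rw [← hμBsplit]
      _ ≤ ENNReal.ofReal (r ^ α) ^ q * Lq := h4
      _ = Lq * ENNReal.ofReal r ^ (α * q) := by rw [hrα]; ring
  calc ENNReal.ofReal lam ^ q * μB ^ (1 - θ)
      = ENNReal.ofReal lam ^ q * μB ^ (1 - θ) * V ^ θ * V⁻¹ ^ θ := by
        rw [mul_assoc, ← ENNReal.mul_rpow_of_nonneg _ _ hθ0,
          ENNReal.mul_inv_cancel hV0 hVt, ENNReal.one_rpow, mul_one]
    _ ≤ Lq * V⁻¹ ^ θ := mul_le_mul_left h6 _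
    _ = V⁻¹ ^ θ * Lq := mul_comm _ _

theorem stmt_16 (n : ℕ) (hn : 1 ≤ n) (α q : ℝ) (hα : 0 ≤ α) (hq : 1 ≤ q)
    (hαq : α * q < n) :
    ∃ C : ℝ, 0 < C ∧
      ∀ f : EuclideanSpace ℝ (Fin n) → ℝ, Measurable f →
        Integrable (fun ζ => |f ζ| ^ q) volume →
          ∀ lam : ℝ, 0 < lam →
            lam ^ q *
                (volume {z : EuclideanSpace ℝ (Fin n) | lam < fracMaximal n α f z}).toReal
                  ^ (1 - α * q / n) ≤
              C * ∫ ζ, |f ζ| ^ q := by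
  haveI : Nonempty (Fin n) := ⟨⟨0, hn⟩⟩
  haveI : Nontrivial (EuclideanSpace ℝ (Fin n)) := by
    unfold EuclideanSpace; infer_instance
  have hq0 : (0:ℝ) < q := lt_of_lt_of_le one_pos hq
  have hn0 : (0:ℝ) < n := by exact_mod_cast hn
  set θ : ℝ := α * q / n with hθdef
  have hθ0 : 0 ≤ θ := by positivity
  have hθ1 : θ < 1 := by rw [hθdef, div_lt_one hn0]; exact hαq
  have h1θ : 0 < 1 - θ := by linarith
  set V : ℝ≥0∞ := volume (ball (0 : EuclideanSpace ℝ (Fin n)) 1) with hVdef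
  have hV0 : V ≠ 0 := (measure_ball_pos _ _ one_pos).ne'
  have hVt : V ≠ ∞ := measure_ball_lt_top.ne
  set C' : ℝ≥0∞ := ENNReal.ofReal ((4:ℝ)^n) * V⁻¹ ^ θ with hC'def
  have hC't : C' ≠ ∞ := ENNReal.mul_ne_top ENNReal.ofReal_ne_top
    (ENNReal.rpow_ne_top_of_nonneg hθ0 (ENNReal.inv_ne_top.2 hV0))
  have hC'0 : 0 ≤ C'.toReal := ENNReal.toReal_nonneg
  refine ⟨C'.toReal + 1, by positivity, ?_⟩
  intro f hf hint lam hlam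
  set g : EuclideanSpace ℝ (Fin n) → ℝ≥0∞ := fun ζ => (‖f ζ‖₊ : ℝ≥0∞) with hgdef
  set T : ℝ≥0∞ := ∫⁻ ζ, g ζ ^ q with hTdef
  have hT : T = ENNReal.ofReal (∫ ζ, |f ζ| ^ q) := by
    rw [ofReal_integral_eq_lintegral_ofReal hint
      (Filter.Eventually.of_forall fun ζ => by positivity)]
    refine lintegral_congr fun ζ => ?_
    simp only [hgdef]
    rw [← enorm_eq_nnnorm, Real.enorm_eq_ofReal_abs, ENNReal.ofReal_rpow_of_nonneg (abs_nonneg _) hq0.le]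
  have hTt : T ≠ ∞ := by rw [hT]; exact ENNReal.ofReal_ne_top
  set Λ : ℝ≥0∞ := ENNReal.ofReal lam ^ q with hΛdef
  have hΛ0 : Λ ≠ 0 := by
    simp [hΛdef, ENNReal.rpow_eq_zero_iff, ENNReal.ofReal_eq_zero, not_le, hlam,
      ENNReal.ofReal_ne_top]
  have hΛt : Λ ≠ ∞ := ENNReal.rpow_ne_top_of_nonneg hq0.le ENNReal.ofReal_ne_top
  set Eset := {z : EuclideanSpace ℝ (Fin n) | lam < fracMaximal n α f z} with hEdef
  have hkey : ∀ z : EuclideanSpace ℝ (Fin n), ∃ r : ℝ, z ∈ Eset →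
      0 < r ∧ Λ * (volume (ball z r)) ^ (1 - θ) ≤ V⁻¹ ^ θ * ∫⁻ ζ in ball z r, g ζ ^ q := by
    intro z
    by_cases hz : z ∈ Eset
    · have hz' : lam < fracMaximal n α f z := hz
      rw [fracMaximal] at hz'
      haveI : Nonempty {r : ℝ // 0 < r} := ⟨⟨1, one_pos⟩⟩
      have hbdd : BddAbove (Set.range fun r : {r : ℝ // 0 < r} =>
          r.1 ^ α * ((volume (ball z r.1)).toReal⁻¹ * ∫ ζ in ball z r.1, |f ζ|)) := by
        by_contra hb
        rw [Real.iSup_of_not_bddAbove hb] at hz'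
        linarith
      obtain ⟨r, hr⟩ := (lt_ciSup_iff hbdd).1 hz'
      exact ⟨r.1, fun _ => ⟨r.2,
        my_key_ball n hn α q hα hq hαq f hf hint lam hlam z r.1 r.2 hr⟩⟩
    · exact ⟨1, fun h => absurd h hz⟩
  choose rad hrad using hkey
  set W : ℝ≥0∞ := V⁻¹ ^ θ * T with hWdef
  have hWt : W ≠ ∞ := ENNReal.mul_ne_top
    (ENNReal.rpow_ne_top_of_nonneg hθ0 (ENNReal.inv_ne_top.2 hV0)) hTt
  set D2 : ℝ≥0∞ := (Λ⁻¹ * W) ^ (1/(1-θ)) * V⁻¹ with hD2def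
  have hD2t : D2 ≠ ∞ := ENNReal.mul_ne_top
    (ENNReal.rpow_ne_top_of_nonneg (by positivity)
      (ENNReal.mul_ne_top (ENNReal.inv_ne_top.2 hΛ0) hWt)) (ENNReal.inv_ne_top.2 hV0)
  set R : ℝ := max 1 D2.toReal with hRdef
  have hRbound : ∀ z ∈ Eset, rad z ≤ R := by
    intro z hz
    obtain ⟨hr, hkey2⟩ := hrad z hz
    have hball : Λ * (volume (ball z (rad z))) ^ (1 - θ) ≤ W := by
      refine hkey2.trans ?_
      rw [hWdef]
      exact mul_le_mul_right (setLIntegral_le_lintegral _ _) _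
    have h1 : (volume (ball z (rad z))) ^ (1-θ) ≤ Λ⁻¹ * W := by
      calc (volume (ball z (rad z))) ^ (1-θ)
          = Λ⁻¹ * (Λ * (volume (ball z (rad z))) ^ (1-θ)) := by
            rw [← mul_assoc, ENNReal.inv_mul_cancel hΛ0 hΛt, one_mul]
        _ ≤ Λ⁻¹ * W := mul_le_mul_right hball _
    have h2 : volume (ball z (rad z)) ≤ (Λ⁻¹*W)^(1/(1-θ)) := by
      have h2' := ENNReal.rpow_le_rpow h1 (le_of_lt (by positivity : (0:ℝ) < 1/(1-θ)))
      rwa [← ENNReal.rpow_mul, mul_one_div_cancel h1θ.ne', ENNReal.rpow_one] at h2'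
    have hb : ENNReal.ofReal (rad z ^ n) * V ≤ (Λ⁻¹*W)^(1/(1-θ)) := by
      refine le_trans (le_of_eq ?_) h2
      rw [Measure.addHaar_ball _ _ hr.le, finrank_euclideanSpace_fin]
    have h3 : ENNReal.ofReal (rad z ^ n) ≤ D2 := by
      calc ENNReal.ofReal (rad z ^ n)
          = ENNReal.ofReal (rad z ^ n) * V * V⁻¹ := by
            rw [mul_assoc, ENNReal.mul_inv_cancel hV0 hVt, mul_one]
        _ ≤ (Λ⁻¹*W)^(1/(1-θ)) * V⁻¹ := mul_le_mul_left hb _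
    have h4 : rad z ^ n ≤ D2.toReal := (ENNReal.ofReal_le_iff_le_toReal hD2t).1 h3
    rcases le_or_gt (rad z) 1 with h5 | h5
    · exact h5.trans (le_max_left _ _)
    · exact le_trans (le_trans (le_self_pow₀ h5.le (by omega)) h4) (le_max_right _ _)
  obtain ⟨u, hu_sub, hu_disj, hu_cov⟩ :=
    Vitali.exists_disjoint_subfamily_covering_enlargement_closedBall Eset id rad R hRbound
      4 (by norm_num)
  have hu_cnt : u.Countable := by
    apply Set.PairwiseDisjoint.countable_of_nonempty_interior hu_disj
    intro b hb
    have hb' : 0 < rad b := (hrad b (hu_sub hb)).1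
    exact ⟨b, ball_subset_interior_closedBall (mem_ball_self hb')⟩
  haveI := hu_cnt.to_subtype
  have hcov : Eset ⊆ ⋃ b ∈ u, closedBall b (4 * rad b) := by
    intro z hz
    obtain ⟨b, hb, hsub⟩ := hu_cov z hz
    exact Set.mem_biUnion hb (hsub (mem_closedBall_self (hrad z hz).1.le))
  have hmeas1 : volume Eset ≤
      ∑' (b : u), volume (closedBall (b : EuclideanSpace ℝ (Fin n)) (4 * rad b)) :=
    (measure_mono hcov).trans (measure_biUnion_le volume hu_cnt _)
  have hball4 : ∀ b ∈ u, volume (closedBall (b : EuclideanSpace ℝ (Fin n)) (4 * rad b)) =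
      ENNReal.ofReal ((4:ℝ)^n) * volume (ball (b : EuclideanSpace ℝ (Fin n)) (rad b)) := by
    intro b hb
    have h0 : 0 < rad b := (hrad b (hu_sub hb)).1
    rw [Measure.addHaar_closedBall _ _ (by positivity), Measure.addHaar_ball _ _ h0.le,
      finrank_euclideanSpace_fin, mul_pow, ENNReal.ofReal_mul (by positivity), mul_assoc]
  set S : ℝ≥0∞ := ∑' (b : u), volume (ball (b : EuclideanSpace ℝ (Fin n)) (rad b)) with hSdef
  have hmeas2 : volume Eset ≤ ENNReal.ofReal ((4:ℝ)^n) * S := by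
    refine hmeas1.trans ?_
    rw [hSdef, ← ENNReal.tsum_mul_left]
    exact le_of_eq (tsum_congr fun b => hball4 b b.2)
  have hofR1 : (1:ℝ≥0∞) ≤ ENNReal.ofReal ((4:ℝ)^n) := by
    rw [ENNReal.one_le_ofReal]
    exact one_le_pow₀ (by norm_num)
  have hE1 : (volume Eset) ^ (1-θ) ≤ ENNReal.ofReal ((4:ℝ)^n) *
      ∑' (b : u), (volume (ball (b : EuclideanSpace ℝ (Fin n)) (rad b))) ^ (1-θ) := by
    calc (volume Eset)^(1-θ) ≤ (ENNReal.ofReal ((4:ℝ)^n) * S)^(1-θ) :=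
          ENNReal.rpow_le_rpow hmeas2 h1θ.le
      _ = (ENNReal.ofReal ((4:ℝ)^n))^(1-θ) * S^(1-θ) := ENNReal.mul_rpow_of_nonneg _ _ h1θ.le
      _ ≤ ENNReal.ofReal ((4:ℝ)^n) * S^(1-θ) := by
          refine mul_le_mul_left ?_ _
          calc (ENNReal.ofReal ((4:ℝ)^n))^(1-θ) ≤ (ENNReal.ofReal ((4:ℝ)^n))^(1:ℝ) :=
                ENNReal.rpow_le_rpow_of_exponent_le hofR1 (by linarith)
            _ = _ := ENNReal.rpow_one _
      _ ≤ _ := mul_le_mul_right (my_tsum_rpow _ h1θ (by linarith)) _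
  have hdisj : Pairwise (Function.onFun Disjoint
      fun b : u => ball (b : EuclideanSpace ℝ (Fin n)) (rad b)) := by
    intro b b' hbb'
    exact (hu_disj b.2 b'.2 (fun h => hbb' (Subtype.ext h))).mono
      ball_subset_closedBall ball_subset_closedBall
  have hsum : ∑' (b : u), ∫⁻ ζ in ball (b : EuclideanSpace ℝ (Fin n)) (rad b), g ζ ^ q ≤ T := by
    rw [← lintegral_iUnion (fun _ => measurableSet_ball) hdisj]
    exact setLIntegral_le_lintegral _ _
  have hmain : Λ * (volume Eset) ^ (1-θ) ≤ C' * T := by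
    calc Λ * (volume Eset)^(1-θ)
        ≤ Λ * (ENNReal.ofReal ((4:ℝ)^n) *
            ∑' (b:u), (volume (ball (b : EuclideanSpace ℝ (Fin n)) (rad b)))^(1-θ)) :=
          mul_le_mul_right hE1 _
      _ = ENNReal.ofReal ((4:ℝ)^n) *
            ∑' (b:u), Λ * (volume (ball (b : EuclideanSpace ℝ (Fin n)) (rad b)))^(1-θ) := by
          rw [ENNReal.tsum_mul_left]; ring
      _ ≤ ENNReal.ofReal ((4:ℝ)^n) *
            ∑' (b:u), V⁻¹^θ * ∫⁻ ζ in ball (b : EuclideanSpace ℝ (Fin n)) (rad b), g ζ ^ q :=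
          mul_le_mul_right (ENNReal.tsum_le_tsum fun b : u => (hrad b.1 (hu_sub b.2)).2) _
      _ = ENNReal.ofReal ((4:ℝ)^n) *
            (V⁻¹^θ * ∑' (b:u), ∫⁻ ζ in ball (b : EuclideanSpace ℝ (Fin n)) (rad b), g ζ ^ q) := by
          rw [ENNReal.tsum_mul_left]
      _ ≤ ENNReal.ofReal ((4:ℝ)^n) * (V⁻¹^θ * T) := mul_le_mul_right (mul_le_mul_right hsum _) _
      _ = C' * T := by rw [hC'def]; ring
  have hC'T : C' * T ≠ ∞ := ENNReal.mul_ne_top hC't hTt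
  have final := ENNReal.toReal_mono hC'T hmain
  rw [ENNReal.toReal_mul, ENNReal.toReal_mul, hT,
    ENNReal.toReal_ofReal (integral_nonneg fun ζ => by positivity)] at final
  have hΛreal : Λ.toReal = lam ^ q := by
    rw [hΛdef, ← ENNReal.toReal_rpow, ENNReal.toReal_ofReal hlam.le]
  have hvol : ((volume Eset)^(1-θ)).toReal = (volume Eset).toReal ^ (1-θ) :=
    (ENNReal.toReal_rpow _ _).symm
  rw [hΛreal, hvol] at final
  have hint0 : 0 ≤ ∫ ζ, |f ζ| ^ q := integral_nonneg fun ζ => by positivity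
  calc lam ^ q * (volume Eset).toReal ^ (1 - α*q/(n:ℝ))
      = lam^q * (volume Eset).toReal ^ (1-θ) := by rw [hθdef]
    _ ≤ C'.toReal * ∫ ζ, |f ζ|^q := final
    _ ≤ (C'.toReal + 1) * ∫ ζ, |f ζ|^q := by nlinarith [hint0]
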